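/- Let G be a finite simple graph that admits a perfect elimination ordering (i.e., G is chordal) and let λ and C be positive integers. If G has a [λ,C]-partition then G has a [λ,C]-coloring. -/

import Mathlib

/-- Reachability inside a set `S`: there is a walk from `u` to `v` all of whose
vertices lie in `S`. -/
def ReachIn {V : Type*} (G : SimpleGraph V) (S : Set V) (u v : V) : Prop :=
  Relation.ReflTransGen (fun a b => G.Adj a b ∧ a ∈ S ∧ b ∈ S) u v

/-- The subgraph induced by `S` is connected. -/
def ConnectedIn {V : Type*} (G : SimpleGraph V) (S : Set V) : Prop :=
  ∀ u ∈ S, ∀ v ∈ S, ReachIn G S u v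

/-- A `[λ,C]`-coloring of `G` with colors `Fin L`: every monochromatic component
(connected component of the subgraph induced by a color class) has at most `C`
vertices. -/
def IsLCColoring {V : Type*} (G : SimpleGraph V) (C : ℕ) {L : ℕ} (c : V → Fin L) : Prop :=
  ∀ v : V, {u | ReachIn G {w | c w = c v} v u}.ncard ≤ C

/-- A `[λ,C]`-partition of `G`: a partition of the vertex set such that every part
induces a connected subgraph, every part has at most `C` vertices, and every
clique of `G` meets at most `L` parts. -/
def IsLCPartition {V : Type*} (G : SimpleGraph V) (L C : ℕ) (Ps : Set (Set V)) : Prop :=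
  (∀ P ∈ Ps, P.Nonempty) ∧ Ps.PairwiseDisjoint id ∧ ⋃₀ Ps = Set.univ ∧
    (∀ P ∈ Ps, ConnectedIn G P ∧ P.ncard ≤ C) ∧
    ∀ K : Set V, G.IsClique K → {P ∈ Ps | (P ∩ K).Nonempty}.ncard ≤ L

/-- `G` has a perfect elimination ordering: a linear ordering of its vertices such
that the later neighbors of each vertex form a clique. -/
def HasPEO {V : Type*} [Fintype V] (G : SimpleGraph V) : Prop :=
  ∃ e : Fin (Fintype.card V) ≃ V,
    ∀ i : Fin (Fintype.card V),
      G.IsClique {w : V | ∃ j : Fin (Fintype.card V), i < j ∧ w = e j ∧ G.Adj (e i) (e j)}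

/-- if a finite chordal graph (a graph with a perfect elimination
ordering) has a `[λ,C]`-partition then it has a `[λ,C]`-coloring. -/
def Touch {V : Type*} (G : SimpleGraph V) (P Q : Set V) : Prop :=
  ∃ p ∈ P, ∃ q ∈ Q, G.Adj p q

lemma touch_symm {V : Type*} {G : SimpleGraph V} {P Q : Set V} (h : Touch G P Q) :
    Touch G Q P := by
  obtain ⟨p, hp, q, hq, hadj⟩ := h
  exact ⟨q, hq, p, hp, hadj.symm⟩

lemma reach_avoid {V : Type*} (G : SimpleGraph V) (P : Set V) (v : V)
    (hsimp : ∀ a b, a ∈ P → b ∈ P → G.Adj v a → G.Adj v b → a ≠ b → G.Adj a b)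
    (u : V) (huv : u ≠ v) :
    ∀ w, ReachIn G P u w →
      (w ≠ v → ReachIn G (P \ {v}) u w) ∧
      (w = v → ∃ b ∈ P \ {v}, G.Adj v b ∧ ReachIn G (P \ {v}) u b) := by
  intro w hw
  induction hw with
  | refl => exact ⟨fun _ => Relation.ReflTransGen.refl, fun h => absurd h huv⟩
  | @tail x y hax hstep ih =>
    obtain ⟨hadj, hxP, hyP⟩ := hstep
    constructor
    · intro hyv
      by_cases hxv : x = v
      · obtain ⟨b', hb', hadjb', hreach⟩ := ih.2 hxv
        by_cases hbb : b' = y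
        · exact hbb ▸ hreach
        · exact hreach.tail ⟨hsimp b' y hb'.1 hyP hadjb' (hxv ▸ hadj) hbb, hb', ⟨hyP, hyv⟩⟩
      · exact (ih.1 hxv).tail ⟨hadj, ⟨hxP, hxv⟩, ⟨hyP, hyv⟩⟩
    · intro hyv
      have hxv : x ≠ v := fun h => G.ne_of_adj hadj (h.trans hyv.symm)
      exact ⟨x, ⟨hxP, hxv⟩, hyv ▸ hadj.symm, ih.1 hxv⟩

lemma exists_first_step {V : Type*} (G : SimpleGraph V) (P : Set V) (v p : V)
    (hv : v ∈ P) (hp : p ∈ P) (hne : p ≠ v) (hconn : ConnectedIn G P) :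
    ∃ b ∈ P, b ≠ v ∧ G.Adj v b := by
  have h := hconn v hv p hp
  rcases Relation.ReflTransGen.cases_head h with h1 | ⟨c, ⟨hadj, _, hcP⟩, _⟩
  · exact absurd h1.symm hne
  · exact ⟨c, hcP, fun h2 => G.irrefl (h2 ▸ hadj), hadj⟩

lemma main_lemma {V : Type*} [Fintype V] (G : SimpleGraph V) (L : ℕ) (hL : 0 < L)
    (idx : V → ℕ)
    (hsimp : ∀ v a b : V, a ≠ b → G.Adj v a → G.Adj v b →
      idx v ≤ idx a → idx v ≤ idx b → G.Adj a b) :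
    ∀ (n : ℕ) (S : Set V) (Ps : Set (Set V)), S.ncard ≤ n →
      (∀ P ∈ Ps, P.Nonempty) → Ps.PairwiseDisjoint id → ⋃₀ Ps = S →
      (∀ P ∈ Ps, ConnectedIn G P) →
      (∀ K : Set V, K ⊆ S → G.IsClique K → {P ∈ Ps | (P ∩ K).Nonempty}.ncard ≤ L) →
      ∃ f : Set V → Fin L,
        ∀ P ∈ Ps, ∀ Q ∈ Ps, P ≠ Q → Touch G P Q → f P ≠ f Q := by
  classical
  intro n
  induction n with
  | zero =>
    intro S Ps hcard hne hdisj hun hconn hclq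
    refine ⟨fun _ => ⟨0, hL⟩, ?_⟩
    intro P hP Q hQ _ _
    exfalso
    obtain ⟨x, hx⟩ := hne P hP
    have hxS : x ∈ S := by rw [← hun]; exact ⟨P, hP, hx⟩
    have hS : S = ∅ :=
      (Set.ncard_eq_zero (Set.toFinite S)).mp (le_antisymm hcard (Nat.zero_le _))
    rw [hS] at hxS; exact hxS
  | succ n ih =>
    intro S Ps hcard hne hdisj hun hconn hclq
    by_cases hPs : Ps = ∅
    · subst hPs
      exact ⟨fun _ => ⟨0, hL⟩, fun P hP => absurd hP (by simp)⟩
    obtain ⟨P₀, hP₀⟩ := Set.nonempty_iff_ne_empty.mpr hPs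
    obtain ⟨x₀, hx₀⟩ := hne P₀ hP₀
    have hSne : S.Nonempty := ⟨x₀, by rw [← hun]; exact ⟨P₀, hP₀, hx₀⟩⟩
    obtain ⟨v, hvS, hvmin⟩ := Set.exists_min_image S idx (Set.toFinite S) hSne
    obtain ⟨P, hPPs, hvP⟩ : ∃ P ∈ Ps, v ∈ P := Set.mem_sUnion.mp (by rw [hun]; exact hvS)
    have hSsub : ∀ Q ∈ Ps, Q ⊆ S := fun Q hQ x hx => by rw [← hun]; exact ⟨Q, hQ, hx⟩
    have huniq : ∀ Q ∈ Ps, ∀ x, x ∈ Q → x ∈ P → Q = P := by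
      intro Q hQ x hxQ hxP
      by_contra hne'
      exact Set.disjoint_left.mp (hdisj hQ hPPs hne') hxQ hxP
    have hsimpS : ∀ a b, a ∈ S → b ∈ S → a ≠ b → G.Adj v a → G.Adj v b → G.Adj a b :=
      fun a b ha hb hab h1 h2 => hsimp v a b hab h1 h2 (hvmin a ha) (hvmin b hb)
    have hScard : (S \ {v}).ncard ≤ n := by
      rw [Set.ncard_diff_singleton_of_mem hvS]
      omega
    have hKS : (insert v {w | w ∈ S ∧ G.Adj v w} : Set V) ⊆ S := by
      intro x hx
      rcases hx with h | h
      · exact h ▸ hvS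
      · exact h.1
    have hKclq : G.IsClique (insert v {w | w ∈ S ∧ G.Adj v w}) := by
      intro a ha b hb hab
      rcases ha with ha | ha
      · subst ha
        rcases hb with hb | hb
        · exact absurd hb.symm hab
        · exact hb.2
      · rcases hb with hb | hb
        · subst hb; exact ha.2.symm
        · exact hsimpS a b ha.1 hb.1 hab ha.2 hb.2
    have hMcard : {Q ∈ Ps | (Q ∩ insert v {w | w ∈ S ∧ G.Adj v w}).Nonempty}.ncard ≤ L :=
      hclq _ hKS hKclq
    have hPM : P ∈ {Q ∈ Ps | (Q ∩ insert v {w | w ∈ S ∧ G.Adj v w}).Nonempty} :=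
      ⟨hPPs, ⟨v, hvP, Set.mem_insert v _⟩⟩
    by_cases hP1 : P = {v}
    · -- Case 1 : the part of v is the singleton {v}
      have hun' : ⋃₀ (Ps \ {P}) = S \ {v} := by
        ext x
        constructor
        · rintro ⟨Q, ⟨hQ, hQP⟩, hxQ⟩
          refine ⟨hSsub Q hQ hxQ, ?_⟩
          intro hxv
          exact hQP (huniq Q hQ x hxQ (by rw [hP1]; exact hxv))
        · rintro ⟨hxS, hxv⟩
          obtain ⟨Q, hQ, hxQ⟩ := Set.mem_sUnion.mp (by rw [hun]; exact hxS)
          refine ⟨Q, ⟨hQ, ?_⟩, hxQ⟩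
          intro hQP
          apply hxv
          have hx1 : x ∈ ({v} : Set V) := by rw [← hP1, ← hQP]; exact hxQ
          exact hx1
      obtain ⟨f', hf'⟩ := ih (S \ {v}) (Ps \ {P}) hScard
        (fun Q hQ => hne Q hQ.1) (hdisj.subset Set.diff_subset) hun'
        (fun Q hQ => hconn Q hQ.1)
        (fun K' hK' hclq' => by
          refine le_trans (Set.ncard_le_ncard ?_ (Set.toFinite _))
            (hclq K' (fun x hx => (hK' hx).1) hclq')
          rintro X ⟨⟨hX1, _⟩, hX2⟩
          exact ⟨hX1, hX2⟩)
      have hTsub : {Q ∈ Ps | Q ≠ P ∧ Touch G P Q} ⊆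
          {Q ∈ Ps | (Q ∩ insert v {w | w ∈ S ∧ G.Adj v w}).Nonempty} \ {P} := by
        rintro Q ⟨hQ, hQP, p, hp, q, hq, hadj⟩
        have hpv : p = v := by rw [hP1] at hp; exact hp
        exact ⟨⟨hQ, ⟨q, hq, Set.mem_insert_of_mem _ ⟨hSsub Q hQ hq, hpv ▸ hadj⟩⟩⟩, hQP⟩
      have hTcard : {Q ∈ Ps | Q ≠ P ∧ Touch G P Q}.ncard ≤ L - 1 := by
        refine le_trans (Set.ncard_le_ncard hTsub (Set.toFinite _)) ?_
        rw [Set.ncard_diff_singleton_of_mem hPM]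
        have hMpos : 1 ≤ {Q ∈ Ps | (Q ∩ insert v {w | w ∈ S ∧ G.Adj v w}).Nonempty}.ncard := by
          rw [Nat.one_le_iff_ne_zero]
          intro h0
          have h1 := (Set.ncard_eq_zero (Set.toFinite _)).mp h0
          rw [h1] at hPM; exact hPM
        omega
      have hF : (f' '' {Q ∈ Ps | Q ≠ P ∧ Touch G P Q}).ncard < L := by
        refine lt_of_le_of_lt (le_trans (Set.ncard_image_le (Set.toFinite _)) hTcard) ?_
        omega
      have hFne : f' '' {Q ∈ Ps | Q ≠ P ∧ Touch G P Q} ≠ Set.univ := by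
        intro h0
        rw [h0, Set.ncard_univ, Nat.card_eq_fintype_card, Fintype.card_fin] at hF
        omega
      obtain ⟨c₀, hc₀⟩ := (Set.ne_univ_iff_exists_notMem _).mp hFne
      refine ⟨fun X => if X = P then c₀ else f' X, ?_⟩
      intro X hX Y hY hXY htouch
      show (if X = P then c₀ else f' X) ≠ (if Y = P then c₀ else f' Y)
      by_cases hXP : X = P
      · have hYP : ¬Y = P := fun h0 => hXY (hXP.trans h0.symm)
        rw [if_pos hXP, if_neg hYP]
        intro h0
        exact hc₀ (h0 ▸ Set.mem_image_of_mem f' ⟨hY, hYP, hXP ▸ htouch⟩)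
      · by_cases hYP : Y = P
        · rw [if_pos hYP, if_neg hXP]
          intro h0
          exact hc₀ (h0 ▸ Set.mem_image_of_mem f' ⟨hX, hXP, touch_symm (hYP ▸ htouch)⟩)
        · rw [if_neg hXP, if_neg hYP]
          exact hf' X ⟨hX, hXP⟩ Y ⟨hY, hYP⟩ hXY htouch
    · -- Case 2 : the part of v has another vertex
      have hp : ∃ p ∈ P, p ≠ v := by
        by_contra hcon
        push_neg at hcon
        exact hP1 (Set.eq_singleton_iff_unique_mem.mpr ⟨hvP, fun x hx => hcon x hx⟩)
      obtain ⟨p, hpP, hpv⟩ := hp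
      obtain ⟨b₀, hb₀P, hb₀v, hb₀adj⟩ := exists_first_step G P v p hvP hpP hpv (hconn P hPPs)
      have hP'ne : (P \ {v}).Nonempty := ⟨b₀, hb₀P, hb₀v⟩
      have hP'notin : ∀ Q ∈ Ps, Q ≠ P → P \ {v} ≠ Q := by
        intro Q hQ hQP heq
        have hb : b₀ ∈ P \ {v} := ⟨hb₀P, hb₀v⟩
        rw [heq] at hb
        exact hQP (huniq Q hQ b₀ hb hb₀P)
      have hne' : ∀ X ∈ insert (P \ {v}) (Ps \ {P}), X.Nonempty := by
        rintro X (hX | hX)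
        · exact hX ▸ hP'ne
        · exact hne X hX.1
      have hdisj' : (insert (P \ {v}) (Ps \ {P})).PairwiseDisjoint id := by
        rw [Set.pairwiseDisjoint_insert]
        refine ⟨hdisj.subset Set.diff_subset, ?_⟩
        intro Q hQ _
        exact Disjoint.mono_left Set.diff_subset (hdisj hPPs hQ.1 (fun h0 => hQ.2 h0.symm))
      have hun' : ⋃₀ insert (P \ {v}) (Ps \ {P}) = S \ {v} := by
        ext x
        constructor
        · rintro ⟨Q, hQ, hxQ⟩
          rcases hQ with hQ | hQ
          · subst hQ
            exact ⟨hSsub P hPPs hxQ.1, hxQ.2⟩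
          · refine ⟨hSsub Q hQ.1 hxQ, ?_⟩
            intro hxv
            exact hQ.2 (huniq Q hQ.1 x hxQ
              (by rw [Set.mem_singleton_iff] at hxv; exact hxv ▸ hvP))
        · rintro ⟨hxS, hxv⟩
          obtain ⟨Q, hQ, hxQ⟩ := Set.mem_sUnion.mp (by rw [hun]; exact hxS)
          by_cases hQP : Q = P
          · exact ⟨P \ {v}, Set.mem_insert _ _, ⟨hQP ▸ hxQ, hxv⟩⟩
          · exact ⟨Q, Set.mem_insert_of_mem _ ⟨hQ, hQP⟩, hxQ⟩
      have hsimpP : ∀ a b, a ∈ P → b ∈ P → G.Adj v a → G.Adj v b → a ≠ b → G.Adj a b :=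
        fun a b ha hb h1 h2 hab =>
          hsimpS a b (hSsub P hPPs ha) (hSsub P hPPs hb) hab h1 h2
      have hconn' : ∀ X ∈ insert (P \ {v}) (Ps \ {P}), ConnectedIn G X := by
        rintro X (hX | hX)
        · subst hX
          intro x hx y hy
          exact (reach_avoid G P v hsimpP x hx.2 y (hconn P hPPs x hx.1 y hy.1)).1 hy.2
        · exact hconn X hX.1
      have hclq' : ∀ K' : Set V, K' ⊆ S \ {v} → G.IsClique K' →
          {X ∈ insert (P \ {v}) (Ps \ {P}) | (X ∩ K').Nonempty}.ncard ≤ L := by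
        intro K' hK'S hK'clq
        have hK'S2 : K' ⊆ S := fun x hx => (hK'S hx).1
        have hM' : {Q ∈ Ps | (Q ∩ K').Nonempty}.ncard ≤ L := hclq K' hK'S2 hK'clq
        by_cases hPK : ((P \ {v}) ∩ K').Nonempty
        · have hPM' : P ∈ {Q ∈ Ps | (Q ∩ K').Nonempty} := by
            obtain ⟨x, hx⟩ := hPK
            exact ⟨hPPs, ⟨x, hx.1.1, hx.2⟩⟩
          have hsub : {X ∈ insert (P \ {v}) (Ps \ {P}) | (X ∩ K').Nonempty} ⊆
              insert (P \ {v}) ({Q ∈ Ps | (Q ∩ K').Nonempty} \ {P}) := by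
            rintro X ⟨hX | hX, hXK⟩
            · exact hX ▸ Set.mem_insert _ _
            · exact Set.mem_insert_of_mem _ ⟨⟨hX.1, hXK⟩, hX.2⟩
          refine le_trans (Set.ncard_le_ncard hsub (Set.toFinite _)) ?_
          refine le_trans (Set.ncard_insert_le _ _) ?_
          rw [Set.ncard_diff_singleton_of_mem hPM']
          have hpos : 1 ≤ {Q ∈ Ps | (Q ∩ K').Nonempty}.ncard := by
            rw [Nat.one_le_iff_ne_zero]
            intro h0
            have h1 := (Set.ncard_eq_zero (Set.toFinite _)).mp h0
            rw [h1] at hPM'; exact hPM'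
          omega
        · have hsub : {X ∈ insert (P \ {v}) (Ps \ {P}) | (X ∩ K').Nonempty} ⊆
              {Q ∈ Ps | (Q ∩ K').Nonempty} := by
            rintro X ⟨hX | hX, hXK⟩
            · exact absurd (hX ▸ hXK) hPK
            · exact ⟨hX.1, hXK⟩
          exact le_trans (Set.ncard_le_ncard hsub (Set.toFinite _)) hM'
      obtain ⟨f', hf'⟩ := ih (S \ {v}) (insert (P \ {v}) (Ps \ {P})) hScard hne' hdisj' hun'
        hconn' hclq'
      have key : ∀ Q ∈ Ps, Q ≠ P → Touch G P Q → Touch G (P \ {v}) Q := by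
        rintro Q hQ hQP ⟨x, hx, y, hy, hadj⟩
        by_cases hxv : x = v
        · have hyv : y ≠ v := fun h0 => hQP (huniq Q hQ y hy (h0 ▸ hvP))
          by_cases hby : b₀ = y
          · exact absurd (huniq Q hQ b₀ (hby ▸ hy) hb₀P) hQP
          · exact ⟨b₀, ⟨hb₀P, hb₀v⟩, y, hy,
              hsimpS b₀ y (hSsub P hPPs hb₀P) (hSsub Q hQ hy) hby hb₀adj (hxv ▸ hadj)⟩
        · exact ⟨x, ⟨hx, hxv⟩, y, hy, hadj⟩
      refine ⟨fun X => if X = P then f' (P \ {v}) else f' X, ?_⟩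
      intro X hX Y hY hXY htouch
      show (if X = P then f' (P \ {v}) else f' X) ≠ (if Y = P then f' (P \ {v}) else f' Y)
      by_cases hXP : X = P
      · have hYP : ¬Y = P := fun h0 => hXY (hXP.trans h0.symm)
        rw [if_pos hXP, if_neg hYP]
        exact hf' (P \ {v}) (Set.mem_insert _ _) Y (Set.mem_insert_of_mem _ ⟨hY, hYP⟩)
          (hP'notin Y hY hYP) (key Y hY hYP (hXP ▸ htouch))
      · by_cases hYP : Y = P
        · rw [if_pos hYP, if_neg hXP]
          exact (hf' (P \ {v}) (Set.mem_insert _ _) X (Set.mem_insert_of_mem _ ⟨hX, hXP⟩)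
            (hP'notin X hX hXP) (key X hX hXP (touch_symm (hYP ▸ htouch)))).symm
        · rw [if_neg hXP, if_neg hYP]
          exact hf' X (Set.mem_insert_of_mem _ ⟨hX, hXP⟩) Y
            (Set.mem_insert_of_mem _ ⟨hY, hYP⟩) hXY htouch


theorem partition_to_coloring {V : Type*} [Fintype V] (G : SimpleGraph V)
    (L C : ℕ) (hL : 0 < L) (hC : 0 < C) (hchordal : HasPEO G)
    (h : ∃ Ps : Set (Set V), IsLCPartition G L C Ps) :
    ∃ c : V → Fin L, IsLCColoring G C c := by
  obtain ⟨e, he⟩ := hchordal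
  have hsimp : ∀ v a b : V, a ≠ b → G.Adj v a → G.Adj v b →
      (e.symm v : ℕ) ≤ (e.symm a : ℕ) → (e.symm v : ℕ) ≤ (e.symm b : ℕ) → G.Adj a b := by
    intro v a b hab hva hvb hia hib
    have hmem : ∀ x : V, G.Adj v x → (e.symm v : ℕ) ≤ (e.symm x : ℕ) →
        x ∈ {w : V | ∃ j, e.symm v < j ∧ w = e j ∧ G.Adj (e (e.symm v)) (e j)} := by
      intro x hvx hix
      refine ⟨e.symm x, ?_, (e.apply_symm_apply x).symm, ?_⟩
      · have hne : e.symm x ≠ e.symm v :=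
          fun h0 => (G.ne_of_adj hvx).symm (e.symm.injective h0)
        exact Fin.lt_def.mpr (lt_of_le_of_ne hix (fun h0 => hne (Fin.ext h0.symm)))
      · rw [e.apply_symm_apply, e.apply_symm_apply]
        exact hvx
    exact he (e.symm v) (hmem a hva hia) (hmem b hvb hib) hab
  obtain ⟨Ps, hPne, hdisj, hun, hpc, hclq⟩ := h
  obtain ⟨f, hf⟩ := main_lemma G L hL (fun v => (e.symm v : ℕ)) hsimp
    (Set.univ : Set V).ncard Set.univ Ps le_rfl hPne hdisj hun
    (fun P hP => (hpc P hP).1) (fun K _ hK => hclq K hK)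
  have hpart : ∀ v : V, ∃ P, P ∈ Ps ∧ v ∈ P := by
    intro v
    have hv : v ∈ ⋃₀ Ps := by rw [hun]; trivial
    exact Set.mem_sUnion.mp hv
  choose part hpartPs hpartmem using hpart
  have huniq : ∀ x : V, ∀ Q, Q ∈ Ps → x ∈ Q → part x = Q := by
    intro x Q hQ hxQ
    by_contra hne'
    exact Set.disjoint_left.mp (hdisj (hpartPs x) hQ hne') (hpartmem x) hxQ
  refine ⟨fun v => f (part v), ?_⟩
  intro v
  have hsub : {u | ReachIn G {w | f (part w) = f (part v)} v u} ⊆ part v := by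
    intro u hu
    have hu' : ReachIn G {w | f (part w) = f (part v)} v u := hu
    clear hu
    induction hu' with
    | refl => exact hpartmem v
    | @tail x y hax hstep ih =>
      obtain ⟨hadj, hcx, hcy⟩ := hstep
      by_contra hy
      have hyne : part v ≠ part y := fun h0 => hy (h0 ▸ hpartmem y)
      have hxpart : part x = part v := huniq x (part v) (hpartPs v) ih
      have htouch : Touch G (part v) (part y) := ⟨x, ih, y, hpartmem y, hadj⟩
      have hne2 := hf (part v) (hpartPs v) (part y) (hpartPs y) hyne htouch
      have hcy' : f (part y) = f (part v) := hcy
      exact hne2 hcy'.symm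
  calc {u | ReachIn G {w | f (part w) = f (part v)} v u}.ncard
      ≤ (part v).ncard := Set.ncard_le_ncard hsub (Set.toFinite _)
    _ ≤ C := (hpc (part v) (hpartPs v)).2
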